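/- For real λ < 0 and γ > 3/2, ∫_0^∞ t^{γ - 5/2} ((t + λ)_-)^{3/2} dt = B(γ - 3/2, 5/2) · |λ|^γ, where (t+λ)_- = max(-(t+λ), 0). -/
import Mathlib

open MeasureTheory Set

/-- The Euler Beta function `B(x,y) = Γ(x)Γ(y)/Γ(x+y)`. -/
noncomputable def betaF (x y : ℝ) : ℝ :=
  Real.Gamma x * Real.Gamma y / Real.Gamma (x + y)

/-- For `λ < 0` and `γ > 3/2`,
`∫_0^∞ t^{γ-5/2} ((t+λ)_-)^{3/2} dt = B(γ-3/2,5/2) |λ|^γ`. -/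
theorem stmt5 (l γ : ℝ) (hl : l < 0) (hγ : 3 / 2 < γ) :
    ∫ t in Set.Ioi (0 : ℝ), t ^ (γ - 5 / 2) * (max (-(t + l)) 0) ^ ((3 : ℝ) / 2)
      = betaF (γ - 3 / 2) (5 / 2) * |l| ^ γ := by
  set a : ℝ := -l with ha_def
  have ha : 0 < a := by simp [ha_def]; linarith
  have habs : |l| = a := abs_of_neg hl
  -- Step 1: reduce to interval integral
  have h1 : (∫ t in Set.Ioi (0:ℝ), t ^ (γ - 5 / 2) * (max (-(t + l)) 0) ^ ((3 : ℝ) / 2))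
      = ∫ t in (0:ℝ)..a, t ^ (γ - 5/2) * (a - t) ^ ((3:ℝ)/2) := by
    rw [intervalIntegral.integral_of_le ha.le]
    rw [show Set.Ioc (0:ℝ) a = Set.Ioi 0 ∩ Set.Ioc 0 a from
      (Set.inter_eq_self_of_subset_right Set.Ioc_subset_Ioi_self).symm]
    rw [← MeasureTheory.setIntegral_indicator measurableSet_Ioc]
    apply MeasureTheory.setIntegral_congr_fun measurableSet_Ioi
    intro t ht
    simp only [Set.indicator_apply, Set.mem_Ioc]
    by_cases hta : t ≤ a
    · have : max (-(t + l)) 0 = a - t := by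
        have h0 : (0:ℝ) ≤ a - t := by linarith
        rw [ha_def] at h0 ⊢
        rw [max_eq_left (by linarith)]
        ring
      rw [this, if_pos ⟨ht, hta⟩]
    · rw [if_neg (by tauto)]
      have : max (-(t + l)) 0 = 0 := max_eq_right (by push_neg at hta; linarith)
      rw [this, Real.zero_rpow (by norm_num), mul_zero]
  -- Step 2: complex beta identity
  have key : ((∫ t in (0:ℝ)..a, t ^ (γ - 5/2) * (a - t) ^ ((3:ℝ)/2) : ℝ) : ℂ)
      = (a:ℂ) ^ (γ:ℂ) * Complex.betaIntegral ((γ:ℂ) - 3/2) (5/2) := by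
    have hb := Complex.betaIntegral_scaled ((γ:ℂ) - 3/2) (5/2) ha
    rw [show ((γ:ℂ) - 3/2) + 5/2 - 1 = (γ:ℂ) by ring] at hb
    rw [← hb, ← intervalIntegral.integral_ofReal]
    apply intervalIntegral.integral_congr
    intro x hx
    rw [Set.uIcc_of_le ha.le] at hx
    rw [show ((γ:ℂ) - 3/2 - 1) = ((γ - 5/2 : ℝ) : ℂ) by push_cast; ring,
        show ((5:ℂ)/2 - 1) = (((3:ℝ)/2 : ℝ) : ℂ) by norm_num]
    dsimp only
    rw [Complex.ofReal_mul, Complex.ofReal_cpow hx.1,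
        Complex.ofReal_cpow (by linarith [hx.2] : (0:ℝ) ≤ a - x), Complex.ofReal_sub]
    push_cast
    ring
  -- Step 3: the beta integral is real
  have hs : (0:ℝ) < γ - 3/2 := by linarith
  have hre1 : 0 < ((γ:ℂ) - 3/2).re := by
    simp [Complex.sub_re]; linarith
  have hre2 : (0:ℝ) < ((5/2 : ℂ)).re := by norm_num
  have hre3 : 0 < (((γ:ℂ) - 3/2) + 5/2).re := by
    simp [Complex.add_re, Complex.sub_re]; linarith
  have hne : Complex.Gamma (((γ:ℂ) - 3/2) + 5/2) ≠ 0 :=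
    Complex.Gamma_ne_zero_of_re_pos hre3
  have hG := Complex.Gamma_mul_Gamma_eq_betaIntegral hre1 hre2
  have hbeta : Complex.betaIntegral ((γ:ℂ) - 3/2) (5/2) = ((betaF (γ - 3/2) (5/2) : ℝ) : ℂ) := by
    have : Complex.betaIntegral ((γ:ℂ) - 3/2) (5/2)
        = Complex.Gamma ((γ:ℂ) - 3/2) * Complex.Gamma (5/2)
          / Complex.Gamma (((γ:ℂ) - 3/2) + 5/2) := by
      rw [eq_div_iff hne]; linear_combination -hG
    rw [this]
    rw [show ((γ:ℂ) - 3/2) = ((γ - 3/2 : ℝ) : ℂ) by push_cast; ring,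
        show ((5:ℂ)/2) = ((5/2 : ℝ) : ℂ) by norm_num]
    rw [← Complex.ofReal_add, Complex.Gamma_ofReal, Complex.Gamma_ofReal, Complex.Gamma_ofReal]
    rw [betaF]
    push_cast
    ring
  -- Combine
  rw [h1, habs]
  have : ((∫ t in (0:ℝ)..a, t ^ (γ - 5/2) * (a - t) ^ ((3:ℝ)/2) : ℝ) : ℂ)
      = ((betaF (γ - 3/2) (5/2) * a ^ γ : ℝ) : ℂ) := by
    rw [key, hbeta, ← Complex.ofReal_cpow ha.le]
    push_cast
    ring
  exact_mod_cast this
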